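/- Let P be a finite connected poset and M : P → vec an interval decomposable persistence module, i.e., M ≅ ⊕_{i∈F} V_{J_i} for a finite family (J_i)_{i∈F} of intervals of P. Then for every path-connected subposet I ∈ Con(P), rk(M)(I) = #{i ∈ F : J_i ⊇ I}, i.e., the generalized rank invariant of M at I equals the number of indices i (counted with multiplicity) such that the interval J_i contains I. -/

import Mathlib

open scoped Classical
open Module

noncomputable section

/-- A pointwise finite-dimensional persistence module over a poset `P`. -/
structure PersMod (𝔽 : Type) [Field 𝔽] (P : Type) [PartialOrder P] where
  V : P → Type
  [iAdd : ∀ p, AddCommGroup (V p)]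
  [iMod : ∀ p, Module 𝔽 (V p)]
  [iFin : ∀ p, FiniteDimensional 𝔽 (V p)]
  φ : ∀ {p q : P}, p ≤ q → (V p →ₗ[𝔽] V q)
  φ_refl : ∀ p : P, φ (le_refl p) = LinearMap.id
  φ_comp : ∀ {p q r : P} (hpq : p ≤ q) (hqr : q ≤ r),
    (φ hqr).comp (φ hpq) = φ (le_trans hpq hqr)

attribute [instance] PersMod.iAdd PersMod.iMod PersMod.iFin

/-- A poset is connected if any two elements are joined by a finite zigzag of
comparable elements. -/
def ZigzagConnected (P : Type) [PartialOrder P] : Prop :=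
  ∀ p q : P, Relation.ReflTransGen (fun a b : P => a ≤ b ∨ b ≤ a) p q

section SetNotions

variable {P : Type} [PartialOrder P]

/-- Convexity of a subset of a poset. -/
def SetConvex (I : Set P) : Prop :=
  ∀ ⦃p q r : P⦄, p ∈ I → r ∈ I → p ≤ q → q ≤ r → q ∈ I

/-- Connectedness of a subset: any two points are joined by a zigzag of
comparable elements staying inside the subset. -/
def SetZigzagConn (I : Set P) : Prop :=
  ∀ p ∈ I, ∀ q ∈ I,
    Relation.ReflTransGen (fun a b : P => a ∈ I ∧ b ∈ I ∧ (a ≤ b ∨ b ≤ a)) p q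

/-- An interval of a poset: nonempty, convex and connected. -/
def IsIntervalSet (I : Set P) : Prop :=
  I.Nonempty ∧ SetConvex I ∧ SetZigzagConn I

/-- A path-connected subposet (member of `Con(P)`): nonempty and any two of its
points are joined by a sequence in `I` in which consecutive elements are related
by the covering relation of `P`. -/
def IsPathConnIn (I : Set P) : Prop :=
  I.Nonempty ∧ ∀ p ∈ I, ∀ q ∈ I,
    Relation.ReflTransGen (fun a b : P => a ∈ I ∧ b ∈ I ∧ (a ⋖ b ∨ b ⋖ a)) p q

lemma setConvex_univ : SetConvex (Set.univ : Set P) := by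
  intro p q r _ _ _ _; trivial

end SetNotions

namespace PersMod

variable {𝔽 : Type} [Field 𝔽] {P : Type} [PartialOrder P]

/-- The limit of a persistence module: the module of compatible sections. -/
def sections (M : PersMod 𝔽 P) : Submodule 𝔽 (∀ p, M.V p) where
  carrier := {x | ∀ (p q : P) (h : p ≤ q), M.φ h (x p) = x q}
  add_mem' := by
    intro x y hx hy p q h
    simp only [Pi.add_apply, map_add]
    rw [hx p q h, hy p q h]
  zero_mem' := by intro p q h; simp
  smul_mem' := by
    intro c x hx p q h
    simp only [Pi.smul_apply, map_smul]
    rw [hx p q h]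

/-- The relations defining the colimit of a persistence module. -/
def colimRel (M : PersMod 𝔽 P) : Submodule 𝔽 (DirectSum P fun p => M.V p) :=
  Submodule.span 𝔽 {z | ∃ (p q : P) (h : p ≤ q) (v : M.V p),
    z = DirectSum.lof 𝔽 P (fun p => M.V p) q (M.φ h v)
      - DirectSum.lof 𝔽 P (fun p => M.V p) p v}

/-- The colimit of a persistence module. -/
abbrev colim (M : PersMod 𝔽 P) :=
  (DirectSum P fun p => M.V p) ⧸ M.colimRel

/-- The canonical map `lim M → colim M` factored through the value at `p`,
i.e. `ι_p ∘ π_p`. -/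
def canonicalMapAt (M : PersMod 𝔽 P) (p : P) : M.sections →ₗ[𝔽] M.colim :=
  (M.colimRel.mkQ.comp (DirectSum.lof 𝔽 P (fun q => M.V q) p)).comp
    ((LinearMap.proj p).comp M.sections.subtype)

/-- The rank of the canonical map `lim M → colim M` computed through `p`. -/
def genRankAt (M : PersMod 𝔽 P) (p : P) : ℕ :=
  finrank 𝔽 (LinearMap.range (M.canonicalMapAt p))

/-- The generalized rank of a persistence module over a (connected) poset. -/
def genRank (M : PersMod 𝔽 P) [Nonempty P] : ℕ :=
  M.genRankAt (Classical.arbitrary P)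

/-- Restriction of a persistence module to a subposet. -/
def restrict (M : PersMod 𝔽 P) (I : Set P) : PersMod 𝔽 I where
  V := fun i => M.V i.val
  φ := fun {i j} h => M.φ h
  φ_refl := fun i => M.φ_refl i.val
  φ_comp := fun hpq hqr => M.φ_comp hpq hqr

/-- The generalized rank invariant: the generalized rank of the restriction
of `M` to `I`. -/
def rkInv (M : PersMod 𝔽 P) (I : Set P) : ℕ :=
  if h : I.Nonempty then (M.restrict I).genRankAt ⟨h.choose, h.choose_spec⟩ else 0

/-- Finite direct sums of persistence modules. -/
def dSum {F : Type} [Fintype F] (Ms : F → PersMod 𝔽 P) : PersMod 𝔽 P where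
  V := fun p => ∀ i, (Ms i).V p
  φ := fun {p q} h => LinearMap.pi fun i => ((Ms i).φ h).comp (LinearMap.proj i)
  φ_refl := by
    intro p
    refine LinearMap.ext fun x => funext fun i => ?_
    simp [(Ms i).φ_refl p]
  φ_comp := by
    intro p q r hpq hqr
    refine LinearMap.ext fun x => funext fun i => ?_
    simpa using LinearMap.congr_fun ((Ms i).φ_comp hpq hqr) (x i)

/-- Binary direct sum of persistence modules. -/
def prodMod (M N : PersMod 𝔽 P) : PersMod 𝔽 P where
  V := fun p => M.V p × N.V p
  φ := fun h => (M.φ h).prodMap (N.φ h)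
  φ_refl := by
    intro p
    refine LinearMap.ext fun x => ?_
    simp [M.φ_refl p, N.φ_refl p]
  φ_comp := by
    intro p q r h1 h2
    refine LinearMap.ext fun x => ?_
    have hM := LinearMap.congr_fun (M.φ_comp h1 h2) x.1
    have hN := LinearMap.congr_fun (N.φ_comp h1 h2) x.2
    simp only [LinearMap.comp_apply] at hM hN ⊢
    simp [hM, hN]

/-- The zero persistence module. -/
def IsZero (M : PersMod 𝔽 P) : Prop := ∀ p, Subsingleton (M.V p)

/-- Isomorphism of persistence modules. -/
def Isom (M N : PersMod 𝔽 P) : Prop :=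
  ∃ e : ∀ p, M.V p ≃ₗ[𝔽] N.V p,
    ∀ (p q : P) (h : p ≤ q) (v : M.V p), e q (M.φ h v) = N.φ h (e p v)

/-- Indecomposability of a persistence module. -/
def Indecomposable (M : PersMod 𝔽 P) : Prop :=
  ¬ M.IsZero ∧
    ∀ M₁ M₂ : PersMod 𝔽 P, M.Isom (M₁.prodMod M₂) → M₁.IsZero ∨ M₂.IsZero

end PersMod

section IntervalModule

variable {P : Type} [PartialOrder P]

/-- The fiber of the interval module at `p`: all of `𝔽` if `p ∈ I`, and `0`
otherwise. -/
def fiber (𝔽 : Type) [Field 𝔽] (I : Set P) (p : P) : Submodule 𝔽 𝔽 where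
  carrier := {x | p ∈ I ∨ x = 0}
  zero_mem' := Or.inr rfl
  add_mem' := by
    rintro x y (h | rfl) (h' | rfl)
    · exact Or.inl h
    · exact Or.inl h
    · exact Or.inl h'
    · exact Or.inr (add_zero 0)
  smul_mem' := by
    rintro c x (h | rfl)
    · exact Or.inl h
    · exact Or.inr (smul_zero c)

/-- The interval module `V_I` of a convex subset `I ⊆ P`. -/
def intervalModule (𝔽 : Type) [Field 𝔽] (I : Set P) (hc : SetConvex I) :
    PersMod 𝔽 P where
  V := fun p => fiber 𝔽 I p
  φ := fun {p q} _h =>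
    LinearMap.restrict (if q ∈ I then LinearMap.id else 0)
      (by
        intro x hx
        by_cases hq : q ∈ I
        · rw [if_pos hq]; exact Or.inl hq
        · rw [if_neg hq]; exact Or.inr rfl)
  φ_refl := by
    intro p
    refine LinearMap.ext fun x => Subtype.ext ?_
    rw [LinearMap.restrict_apply]
    by_cases hp : p ∈ I
    · simp [hp]
    · rcases x.2 with h | h
      · exact absurd h hp
      · simp [hp, h]
  φ_comp := by
    intro p q r hpq hqr
    refine LinearMap.ext fun x => Subtype.ext ?_
    simp only [LinearMap.comp_apply, LinearMap.restrict_apply]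
    by_cases hr : r ∈ I <;> by_cases hq : q ∈ I <;> simp [hr, hq]
    rcases x.2 with hp | h0
    · exact absurd (hc hp hr hpq hqr) hq
    · exact h0.symm

end IntervalModule

section Grid

variable {𝔽 : Type} [Field 𝔽]

lemma le_sub_e1 (p : ℤ × ℤ) : ((p.1 - 1, p.2) : ℤ × ℤ) ≤ p :=
  Prod.le_def.mpr ⟨show p.1 - 1 ≤ p.1 by omega, le_rfl⟩

lemma le_sub_e2 (p : ℤ × ℤ) : ((p.1, p.2 - 1) : ℤ × ℤ) ≤ p :=
  Prod.le_def.mpr ⟨le_rfl, show p.2 - 1 ≤ p.2 by omega⟩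

lemma le_sub_e12_e1 (p : ℤ × ℤ) : ((p.1 - 1, p.2 - 1) : ℤ × ℤ) ≤ (p.1 - 1, p.2) :=
  Prod.le_def.mpr ⟨le_rfl, show p.2 - 1 ≤ p.2 by omega⟩

lemma le_sub_e12_e2 (p : ℤ × ℤ) : ((p.1 - 1, p.2 - 1) : ℤ × ℤ) ≤ (p.1, p.2 - 1) :=
  Prod.le_def.mpr ⟨show p.1 - 1 ≤ p.1 by omega, le_rfl⟩

/-- The `0`-th bigraded Betti number of `M : ℤ² → vec` at `p`, defined via the
Koszul complex as the dimension of the cokernel of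
`M(p-e₁) ⊕ M(p-e₂) → M(p)`. -/
def beta0 (M : PersMod 𝔽 (ℤ × ℤ)) (p : ℤ × ℤ) : ℕ :=
  finrank 𝔽
    (M.V p ⧸ LinearMap.range ((M.φ (le_sub_e1 p)).coprod (M.φ (le_sub_e2 p))))

/-- The `2`-nd bigraded Betti number of `M : ℤ² → vec` at `p`, defined via the
Koszul complex as the dimension of the intersection of the kernels of the two
structure maps out of `M(p-e₁-e₂)`. -/
def beta2 (M : PersMod 𝔽 (ℤ × ℤ)) (p : ℤ × ℤ) : ℕ :=
  finrank 𝔽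
    ↥(LinearMap.ker (M.φ (le_sub_e12_e1 p)) ⊓ LinearMap.ker (M.φ (le_sub_e12_e2 p)))

/-- The `1`-st bigraded Betti number of `M : ℤ² → vec` at `p`, via the Koszul
complex characterization. -/
def beta1 (M : PersMod 𝔽 (ℤ × ℤ)) (p : ℤ × ℤ) : ℤ :=
  (beta0 M p : ℤ) + (beta2 M p : ℤ)
    - (finrank 𝔽 (M.V p) : ℤ) + (finrank 𝔽 (M.V (p.1 - 1, p.2)) : ℤ)
    + (finrank 𝔽 (M.V (p.1, p.2 - 1)) : ℤ) - (finrank 𝔽 (M.V (p.1 - 1, p.2 - 1)) : ℤ)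

/-- The maximal element of the grid `[m] × [n]` below a point `p ≥ (0,0)` of `ℤ²`. -/
def clamp (m n : ℕ) (p : ℤ × ℤ) : Fin (m + 1) × Fin (n + 1) :=
  (⟨min p.1.toNat m, Nat.lt_succ_of_le (min_le_right _ _)⟩,
   ⟨min p.2.toNat n, Nat.lt_succ_of_le (min_le_right _ _)⟩)

lemma clamp_mono {m n : ℕ} {p q : ℤ × ℤ} (h : p ≤ q) : clamp m n p ≤ clamp m n q := by
  obtain ⟨h1, h2⟩ := Prod.le_def.mp h
  refine Prod.le_def.mpr ⟨?_, ?_⟩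
  · exact Fin.mk_le_mk.mpr (min_le_min (Int.toNat_le_toNat h1) le_rfl)
  · exact Fin.mk_le_mk.mpr (min_le_min (Int.toNat_le_toNat h2) le_rfl)

/-- `M : ℤ² → vec` is encoded by `M' : [m] × [n] → vec`. -/
def IsEncodedBy {m n : ℕ} (M : PersMod 𝔽 (ℤ × ℤ))
    (M' : PersMod 𝔽 (Fin (m + 1) × Fin (n + 1))) : Prop :=
  (∀ p : ℤ × ℤ, ¬(0 ≤ p.1 ∧ 0 ≤ p.2) → Subsingleton (M.V p)) ∧
  ∃ e : ∀ p : ℤ × ℤ, 0 ≤ p.1 → 0 ≤ p.2 → (M.V p ≃ₗ[𝔽] M'.V (clamp m n p)),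
    ∀ (p q : ℤ × ℤ) (hp1 : 0 ≤ p.1) (hp2 : 0 ≤ p.2) (hq1 : 0 ≤ q.1) (hq2 : 0 ≤ q.2)
      (hpq : p ≤ q) (v : M.V p),
      e q hq1 hq2 (M.φ hpq v) = M'.φ (clamp_mono hpq) (e p hp1 hp2 v)

/-- A point `a ∈ ℤ²` "belongs" to `J ⊆ [m] × [n]` if it is a grid point lying in `J`. -/
def gridPt {m n : ℕ} (a : ℤ × ℤ) (J : Set (Fin (m + 1) × Fin (n + 1))) : Prop :=
  ∃ x ∈ J, (((x.1 : ℕ) : ℤ), ((x.2 : ℕ) : ℤ)) = a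

end Grid

section AuxLemmas

namespace PersMod

variable {𝔽 : Type} [Field 𝔽] {Q : Type} [PartialOrder Q]

/-- Along a zigzag of comparable points, the class in the colimit of the value
of a section is constant. -/
lemma mkQ_lof_section_eq (N : PersMod 𝔽 Q) (y : N.sections) {a b : Q}
    (h : Relation.ReflTransGen (fun a b : Q => a ≤ b ∨ b ≤ a) a b) :
    N.colimRel.mkQ (DirectSum.lof 𝔽 Q (fun p => N.V p) a (y.val a)) =
      N.colimRel.mkQ (DirectSum.lof 𝔽 Q (fun p => N.V p) b (y.val b)) := by
  have key : ∀ (u v : Q), u ≤ v →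
      N.colimRel.mkQ (DirectSum.lof 𝔽 Q (fun p => N.V p) u (y.val u)) =
        N.colimRel.mkQ (DirectSum.lof 𝔽 Q (fun p => N.V p) v (y.val v)) := by
    intro u v huv
    rw [Submodule.mkQ_apply, Submodule.mkQ_apply, Submodule.Quotient.eq]
    have hmem : DirectSum.lof 𝔽 Q (fun p => N.V p) v (N.φ huv (y.val u))
        - DirectSum.lof 𝔽 Q (fun p => N.V p) u (y.val u) ∈ N.colimRel :=
      Submodule.subset_span ⟨u, v, huv, y.val u, rfl⟩
    rw [y.2 u v huv] at hmem
    simpa [neg_sub] using neg_mem hmem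
  induction h with
  | refl => rfl
  | tail _hac step ih =>
    rcases step with hle | hle
    · exact ih.trans (key _ _ hle)
    · exact ih.trans (key _ _ hle).symm

/-- Restriction preserves isomorphism. -/
lemma Isom.restrict_isom {M N : PersMod 𝔽 Q} (h : M.Isom N) (I : Set Q) :
    (M.restrict I).Isom (N.restrict I) := by
  obtain ⟨e, he⟩ := h
  exact ⟨fun p => e p.val, fun p q hpq v => he p.val q.val hpq v⟩

/-- The generalized rank at a point is invariant under isomorphism. -/
lemma genRankAt_eq_of_isom {M N : PersMod 𝔽 Q} (h : M.Isom N) (p : Q) :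
    M.genRankAt p = N.genRankAt p := by
  obtain ⟨e, he⟩ := h
  set E : (∀ q, M.V q) ≃ₗ[𝔽] (∀ q, N.V q) := LinearEquiv.piCongrRight e with hE
  set D : (DirectSum Q fun q => M.V q) ≃ₗ[𝔽] (DirectSum Q fun q => N.V q) :=
    DFinsupp.mapRange.linearEquiv e with hD
  have hDlof : ∀ (q : Q) (v : M.V q),
      D (DirectSum.lof 𝔽 Q (fun r => M.V r) q v)
        = DirectSum.lof 𝔽 Q (fun r => N.V r) q (e q v) := by
    intro q v
    rw [hD]
    erw [DFinsupp.mapRange.linearEquiv_apply]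
    exact DFinsupp.mapRange_single
  have hrel : M.colimRel.map (D : (DirectSum Q fun q => M.V q) →ₗ[𝔽] _) = N.colimRel := by
    rw [PersMod.colimRel, PersMod.colimRel, Submodule.map_span]
    congr 1
    ext z
    simp only [Set.mem_image, Set.mem_setOf_eq]
    constructor
    · rintro ⟨w, ⟨p', q', hpq, v, rfl⟩, rfl⟩
      refine ⟨p', q', hpq, e p' v, ?_⟩
      simp only [map_sub, LinearEquiv.coe_coe]
      rw [hDlof, hDlof, he]
    · rintro ⟨p', q', hpq, w, rfl⟩
      refine ⟨DirectSum.lof 𝔽 Q (fun r => M.V r) q' (M.φ hpq ((e p').symm w))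
        - DirectSum.lof 𝔽 Q (fun r => M.V r) p' ((e p').symm w),
        ⟨p', q', hpq, (e p').symm w, rfl⟩, ?_⟩
      simp only [map_sub, LinearEquiv.coe_coe]
      rw [hDlof, hDlof, he, LinearEquiv.apply_symm_apply]
  set eCol : M.colim ≃ₗ[𝔽] N.colim :=
    Submodule.Quotient.equiv M.colimRel N.colimRel D hrel with heCol
  have hsecmap : M.sections.map (E : (∀ q, M.V q) →ₗ[𝔽] ∀ q, N.V q) = N.sections := by
    ext y
    simp only [Submodule.mem_map]
    constructor
    · rintro ⟨x, hx, rfl⟩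
      intro p' q' hpq
      show N.φ hpq (E x p') = E x q'
      rw [hE, LinearEquiv.piCongrRight_apply, LinearEquiv.piCongrRight_apply,
        ← he, hx p' q' hpq]
    · intro hy
      refine ⟨fun q => (e q).symm (y q), fun p' q' hpq => ?_, funext fun q => ?_⟩
      · apply (e q').injective
        rw [he, LinearEquiv.apply_symm_apply, LinearEquiv.apply_symm_apply]
        exact hy p' q' hpq
      · show E _ q = y q
        rw [hE, LinearEquiv.piCongrRight_apply, LinearEquiv.apply_symm_apply]
  set eSec : M.sections ≃ₗ[𝔽] N.sections :=
    E.ofSubmodules M.sections N.sections hsecmap with heSec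
  have hcomm : ∀ x : M.sections, N.canonicalMapAt p (eSec x) = eCol (M.canonicalMapAt p x) := by
    intro x
    have h1 : (eSec x).val p = e p (x.val p) := rfl
    show N.colimRel.mkQ (DirectSum.lof 𝔽 Q (fun r => N.V r) p ((eSec x).val p)) = _
    have h2 : eCol (M.canonicalMapAt p x)
        = N.colimRel.mkQ (D (DirectSum.lof 𝔽 Q (fun r => M.V r) p (x.val p))) := by
      show eCol (Submodule.Quotient.mk _) = _
      rw [heCol]
      rw [Submodule.Quotient.equiv_apply]
      erw [Submodule.mapQ_apply]
    rw [h2, hDlof, h1, Submodule.mkQ_apply]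
  have hranges : LinearMap.range (N.canonicalMapAt p)
      = (LinearMap.range (M.canonicalMapAt p)).map (eCol : M.colim →ₗ[𝔽] N.colim) := by
    ext z
    simp only [LinearMap.mem_range, Submodule.mem_map]
    simp only [LinearEquiv.coe_coe]
    constructor
    · rintro ⟨y, rfl⟩
      exact ⟨M.canonicalMapAt p (eSec.symm y), ⟨eSec.symm y, rfl⟩,
        by rw [← hcomm, LinearEquiv.apply_symm_apply]⟩
    · rintro ⟨w, ⟨x, rfl⟩, rfl⟩
      exact ⟨eSec x, hcomm x⟩
  rw [PersMod.genRankAt, PersMod.genRankAt, hranges, LinearEquiv.finrank_map_eq]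


end PersMod

end AuxLemmas

section CoreLemma

variable {𝔽 : Type} [Field 𝔽] {P : Type} [PartialOrder P]

/-- Extract the underlying field element of a fiber element. -/
def fibval {J : Set P} {p : P} (v : fiber 𝔽 J p) : 𝔽 := v.val

lemma fibval_zero {J : Set P} {p : P} : fibval (0 : fiber 𝔽 J p) = 0 := rfl

lemma interval_phi_val {J : Set P} (hc : SetConvex J) {p q : P} (h : p ≤ q)
    (x : fiber 𝔽 J p) :
    fibval ((intervalModule 𝔽 J hc).φ h x) = if q ∈ J then fibval x else 0 := by
  have hrfl : fibval ((intervalModule 𝔽 J hc).φ h x)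
      = (if q ∈ J then LinearMap.id else (0 : 𝔽 →ₗ[𝔽] 𝔽)) x.val := rfl
  rw [hrfl]
  by_cases hq : q ∈ J <;> simp [hq, fibval]

lemma pathconn_to_zigzag {I : Set P} {p q : P}
    (h : Relation.ReflTransGen (fun a b : P => a ∈ I ∧ b ∈ I ∧ (a ⋖ b ∨ b ⋖ a)) p q)
    (hp : p ∈ I) :
    ∀ hq : q ∈ I,
      Relation.ReflTransGen (fun a b : ↥I => a ≤ b ∨ b ≤ a) ⟨p, hp⟩ ⟨q, hq⟩ := by
  induction h with
  | refl => intro hq; exact Relation.ReflTransGen.refl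
  | tail _hac step ih =>
    intro hq
    exact (ih step.1).tail
      (step.2.2.imp (fun hcov => Subtype.mk_le_mk.mpr hcov.le)
        (fun hcov => Subtype.mk_le_mk.mpr hcov.le))

lemma genRankAt_dSum_intervals [Fintype P] {F : Type} [Fintype F]
    (Js : F → Set P) (hc : ∀ i, SetConvex (Js i)) (I : Set P) (hI : IsPathConnIn I)
    (p₀ : ↥I) :
    (PersMod.dSum fun i => (intervalModule 𝔽 (Js i) (hc i)).restrict I).genRankAt p₀
      = Nat.card {i : F // I ⊆ Js i} := by
  letI decI : DecidableEq ↥I := fun a b => Classical.propDecidable (a = b)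
  set N : PersMod 𝔽 ↥I :=
    PersMod.dSum fun i => (intervalModule 𝔽 (Js i) (hc i)).restrict I with hN
  set S := {i : F // I ⊆ Js i} with hS
  -- the evaluation map on sections
  set Φ : N.sections →ₗ[𝔽] (S → 𝔽) :=
    { toFun := fun x i => fibval (x.val p₀ i.val)
      map_add' := by intro x y; rfl
      map_smul' := by intro c x; rfl } with hΦ
  -- the summation map on the direct sum, killing the relations
  set T : (DirectSum ↥I fun p => N.V p) →ₗ[𝔽] (S → 𝔽) :=
    { toFun := fun z i => ∑ p : ↥I, fibval (z p i.val)
      map_add' := by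
        intro z w
        funext i
        simp only [DFinsupp.add_apply, Pi.add_apply]
        rw [← Finset.sum_add_distrib]
        rfl
      map_smul' := by
        intro c z
        funext i
        simp only [DFinsupp.smul_apply, RingHom.id_apply, Pi.smul_apply, smul_eq_mul,
          Finset.mul_sum]
        rfl } with hT
  have hTlof : ∀ (q : ↥I) (w : N.V q),
      T (DirectSum.lof 𝔽 ↥I (fun p => N.V p) q w) = fun i => fibval (w i.val) := by
    intro q w
    funext i
    show ∑ p : ↥I, fibval ((DFinsupp.single q w) p i.val) = fibval (w i.val)
    rw [Finset.sum_eq_single q]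
    · rw [DFinsupp.single_eq_same]
    · intro b _ hb
      rw [DFinsupp.single_eq_of_ne hb]
      rfl
    · intro hq
      exact absurd (Finset.mem_univ q) hq
  -- structure maps of N act componentwise through the interval modules
  have hφcomp : ∀ (p q : ↥I) (h : p ≤ q) (v : N.V p) (j : F),
      (N.φ h v) j = ((intervalModule 𝔽 (Js j) (hc j)).restrict I).φ h (v j) := by
    intro p q h v j
    rfl
  have hφval : ∀ (p q : ↥I) (h : p ≤ q) (v : N.V p) (j : F),
      fibval ((N.φ h v) j) = if (q : P) ∈ Js j then fibval (v j) else 0 := by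
    intro p q h v j
    rw [hφcomp]
    exact interval_phi_val (hc j) h (v j)
  have hker : N.colimRel ≤ LinearMap.ker T := by
    rw [PersMod.colimRel, Submodule.span_le]
    rintro z ⟨p, q, hpq, v, rfl⟩
    simp only [SetLike.mem_coe, LinearMap.mem_ker, map_sub]
    rw [sub_eq_zero]
    refine (hTlof q (N.φ hpq v)).trans (Eq.trans ?_ (hTlof p v).symm)
    funext i
    rw [hφval p q hpq v i.val, if_pos (i.2 q.2)]
  set T' : N.colim →ₗ[𝔽] (S → 𝔽) := N.colimRel.liftQ T hker with hT'
  have hfactor : ∀ x : N.sections, T' (N.canonicalMapAt p₀ x) = Φ x := by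
    intro x
    show T' (Submodule.Quotient.mk _) = _
    erw [Submodule.liftQ_apply]
    exact hTlof p₀ (x.val p₀)
  -- the single-component sections
  have hphi_single : ∀ (p q : ↥I) (h : p ≤ q) (i : F)
      (v : ((intervalModule 𝔽 (Js i) (hc i)).restrict I).V p),
      N.φ h (Pi.single (M := fun j => ((intervalModule 𝔽 (Js j) (hc j)).restrict I).V p) i v)
        = Pi.single i (((intervalModule 𝔽 (Js i) (hc i)).restrict I).φ h v) := by
    intro p q h i v
    funext j
    erw [hφcomp]
    by_cases hj : j = i
    · subst hj; rw [Pi.single_eq_same, Pi.single_eq_same]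
    · rw [Pi.single_eq_of_ne hj, Pi.single_eq_of_ne hj, map_zero]
  set xi : F → N.sections → N.sections := fun i x =>
    ⟨fun p => Pi.single i (x.val p i), by
      intro p q h
      rw [hphi_single p q h i (x.val p i)]
      congr 1
      rw [← hφcomp p q h (x.val p) i, x.2 p q h]⟩ with hxi
  have hxsum : ∀ x : N.sections, x = ∑ i : F, xi i x := by
    intro x
    apply Subtype.ext
    rw [Submodule.coe_sum]
    funext p
    rw [Finset.sum_apply]
    have : ∀ i, (xi i x).val p = Pi.single i (x.val p i) := fun i => rfl
    simp only [this]
    exact (Finset.univ_sum_single (x.val p)).symm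
  -- kernel of the canonical map equals kernel of Φ
  have hcanx : ∀ x : N.sections, N.canonicalMapAt p₀ x
      = N.colimRel.mkQ (DirectSum.lof 𝔽 ↥I (fun p => N.V p) p₀ (x.val p₀)) := by
    intro x; rfl
  have hxival : ∀ (i : F) (x : N.sections) (p : ↥I),
      (xi i x).val p = Pi.single
        (M := fun j => ((intervalModule 𝔽 (Js j) (hc j)).restrict I).V p) i (x.val p i) :=
    fun i x p => rfl
  have hker2 : ∀ x : N.sections, Φ x = 0 → N.canonicalMapAt p₀ x = 0 := by
    intro x hx
    rw [hxsum x, map_sum]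
    refine Finset.sum_eq_zero fun i _ => ?_
    by_cases hiS : I ⊆ Js i
    · have h0 : fibval (x.val p₀ i) = 0 := congrFun hx ⟨i, hiS⟩
      have h1 : x.val p₀ i = 0 := Subtype.ext h0
      rw [hcanx]
      have h2 : (xi i x).val p₀ = 0 := by
        rw [hxival, h1, Pi.single_zero]; rfl
      rw [h2, map_zero, map_zero]
    · obtain ⟨q, hqI, hqJ⟩ := Set.not_subset.mp hiS
      have hzig := pathconn_to_zigzag (hI.2 p₀.val p₀.2 q hqI) p₀.2 hqI
      have := PersMod.mkQ_lof_section_eq N (xi i x) hzig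
      rw [hcanx]
      have hp₀ : (⟨p₀.val, p₀.2⟩ : ↥I) = p₀ := rfl
      rw [hp₀] at this
      rw [this]
      have hval0 : (xi i x).val ⟨q, hqI⟩ = 0 := by
        have h0' : x.val ⟨q, hqI⟩ i = 0 := by
          rcases (x.val ⟨q, hqI⟩ i).2 with hmem | h0
          · exact absurd hmem hqJ
          · exact Subtype.ext h0
        rw [hxival, h0', Pi.single_zero]; rfl
      rw [hval0, map_zero, map_zero]
  -- surjectivity of Φ
  have hsurj : Function.Surjective Φ := by
    intro f
    set y : S → N.sections := fun i =>
      ⟨fun p => Pi.single i.val (⟨1, Or.inl (i.2 p.2)⟩ : fiber 𝔽 (Js i.val) (p : P)), by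
        intro p q h
        erw [hphi_single p q h i.val]
        have hval : ((intervalModule 𝔽 (Js i.val) (hc i.val)).restrict I).φ h
            (⟨1, Or.inl (i.2 p.2)⟩ : fiber 𝔽 (Js i.val) (p : P))
            = (⟨1, Or.inl (i.2 q.2)⟩ : fiber 𝔽 (Js i.val) (q : P)) := by
          apply Subtype.ext
          have hv := interval_phi_val (hc i.val) (show (p : P) ≤ (q : P) from h)
            (⟨1, Or.inl (i.2 p.2)⟩ : fiber 𝔽 (Js i.val) (p : P))
          rw [if_pos (i.2 q.2)] at hv
          exact hv
        exact congrArg _ hval⟩ with hy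
    refine ⟨∑ i : S, f i • y i, ?_⟩
    have hΦy : ∀ i j : S, Φ (y i) j = if j = i then 1 else 0 := by
      intro i j
      show fibval ((Pi.single i.val _ : N.V p₀) j.val) = _
      by_cases hji : j = i
      · subst hji; erw [Pi.single_eq_same, if_pos rfl]; rfl
      · erw [Pi.single_eq_of_ne (fun hcon => hji (Subtype.ext hcon)), if_neg hji]
        rfl
    rw [map_sum]
    funext j
    rw [Finset.sum_apply]
    have : ∀ i : S, (Φ (f i • y i)) j = f i * (if j = i then 1 else 0) := by
      intro i
      rw [map_smul]
      show f i * Φ (y i) j = _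
      rw [hΦy]
    simp only [this, mul_ite, mul_one, mul_zero]
    rw [Finset.sum_eq_single j (fun b _ hb => if_neg (Ne.symm hb)) (fun h => absurd (Finset.mem_univ j) h), if_pos rfl]
  -- count dimensions
  have hkereq : LinearMap.ker (N.canonicalMapAt p₀) = LinearMap.ker Φ := by
    ext x
    simp only [LinearMap.mem_ker]
    constructor
    · intro hx
      rw [← hfactor x, hx, map_zero]
    · exact hker2 x
  have h3 := LinearMap.finrank_range_add_finrank_ker (N.canonicalMapAt p₀)
  have h4 := LinearMap.finrank_range_add_finrank_ker Φ
  rw [hkereq] at h3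
  have h5 : finrank 𝔽 (LinearMap.range Φ) = Nat.card S := by
    rw [LinearMap.range_eq_top.mpr hsurj, finrank_top, Module.finrank_pi,
      Nat.card_eq_fintype_card]
  rw [PersMod.genRankAt]
  omega


end CoreLemma

/-- If `M` is interval decomposable, `M ≅ ⊕_{i ∈ F} V_{J_i}`,
then for every path-connected subposet `I ∈ Con(P)`, the generalized rank
invariant `rk(M)(I)` equals the number of indices `i` with `J_i ⊇ I`. -/
theorem rkInv_eq_card_of_intervalDecomposable (𝔽 : Type) [Field 𝔽] (P : Type)
    [PartialOrder P] [Fintype P] (hconn : ZigzagConnected P) (M : PersMod 𝔽 P)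
    (F : Type) [Fintype F] (Js : F → Set P) (hJ : ∀ i, IsIntervalSet (Js i))
    (hiso : M.Isom (PersMod.dSum fun i => intervalModule 𝔽 (Js i) (hJ i).2.1))
    (I : Set P) (hI : IsPathConnIn I) :
    M.rkInv I = Nat.card {i : F // I ⊆ Js i} := by
  have hne : I.Nonempty := hI.1
  rw [PersMod.rkInv, dif_pos hne]
  rw [PersMod.genRankAt_eq_of_isom (hiso.restrict_isom I)
    (⟨hne.choose, hne.choose_spec⟩ : ↥I)]
  rw [show (PersMod.dSum fun i => intervalModule 𝔽 (Js i) (hJ i).2.1).restrict I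
      = PersMod.dSum fun i => (intervalModule 𝔽 (Js i) (hJ i).2.1).restrict I from rfl]
  exact genRankAt_dSum_intervals Js (fun i => (hJ i).2.1) I hI _
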